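/- For every natural number n ≥ 1, with T_n(u,v) = Σ_{k=0}^{n} C(n,k)·C(n,k-1)·u^k·v^{n-k+1}, the two polynomial expressions A(u,v) = (u+v)·∂T_n/∂u + 2v·∂T_n/∂v − T_n and B(u,v) = (u+v)·∂T_n/∂v + 2u·∂T_n/∂u − T_n satisfy the exactness condition ∂A/∂v = ∂B/∂u for all real u, v. -/

import Mathlib

open Real Finset

/-- Conserved density of the shallow water hierarchy:
`T n u v = ∑_{k=0}^{n} C(n,k) * C(n,k-1) * u^k * v^(n-k+1)`, with `C(n,-1) = 0`. -/
noncomputable def Tsw (n : ℕ) (u v : ℝ) : ℝ :=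
  ∑ k ∈ Finset.range (n + 1),
    ((n.choose k : ℝ) * (if k = 0 then (0 : ℝ) else (n.choose (k - 1) : ℝ))) *
      u ^ k * v ^ (n - k + 1)

noncomputable def cc (n k : ℕ) : ℝ :=
  (n.choose k : ℝ) * (if k = 0 then (0 : ℝ) else (n.choose (k - 1) : ℝ))

lemma Tsw_def (n : ℕ) (u v : ℝ) :
    Tsw n u v = ∑ k ∈ Finset.range (n + 1), cc n k * u ^ k * v ^ (n - k + 1) := rfl

noncomputable def Tu (n : ℕ) (u v : ℝ) : ℝ :=
  ∑ k ∈ Finset.range (n + 1), cc n k * ((k : ℝ) * u ^ (k - 1)) * v ^ (n - k + 1)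

noncomputable def Tv (n : ℕ) (u v : ℝ) : ℝ :=
  ∑ k ∈ Finset.range (n + 1), cc n k * u ^ k * (((n - k + 1 : ℕ) : ℝ) * v ^ (n - k))

noncomputable def Tuv (n : ℕ) (u v : ℝ) : ℝ :=
  ∑ k ∈ Finset.range (n + 1),
    cc n k * ((k : ℝ) * u ^ (k - 1)) * (((n - k + 1 : ℕ) : ℝ) * v ^ (n - k))

noncomputable def Tvv (n : ℕ) (u v : ℝ) : ℝ :=
  ∑ k ∈ Finset.range (n + 1),
    cc n k * u ^ k * (((n - k + 1 : ℕ) : ℝ) * (((n - k : ℕ) : ℝ) * v ^ (n - k - 1)))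

noncomputable def Tuu (n : ℕ) (u v : ℝ) : ℝ :=
  ∑ k ∈ Finset.range (n + 1),
    cc n k * ((k : ℝ) * (((k - 1 : ℕ) : ℝ) * u ^ (k - 1 - 1))) * v ^ (n - k + 1)

lemma hT_u (n : ℕ) (u v : ℝ) : HasDerivAt (fun u' => Tsw n u' v) (Tu n u v) u := by
  simp only [Tsw_def, Tu]
  apply HasDerivAt.fun_sum
  intro k hk
  exact ((hasDerivAt_pow k u).const_mul (cc n k)).mul_const (v ^ (n - k + 1))

lemma hT_v (n : ℕ) (u v : ℝ) : HasDerivAt (fun v' => Tsw n u v') (Tv n u v) v := by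
  simp only [Tsw_def, Tv]
  apply HasDerivAt.fun_sum
  intro k hk
  have h := (hasDerivAt_pow (n - k + 1) v).const_mul (cc n k * u ^ k)
  convert h using 2
  · rfl
  · simp

lemma hTu_v (n : ℕ) (u v : ℝ) : HasDerivAt (fun v' => Tu n u v') (Tuv n u v) v := by
  simp only [Tu, Tuv]
  apply HasDerivAt.fun_sum
  intro k hk
  have h := (hasDerivAt_pow (n - k + 1) v).const_mul (cc n k * ((k : ℝ) * u ^ (k - 1)))
  convert h using 2
  · rfl
  · simp

lemma hTv_v (n : ℕ) (u v : ℝ) : HasDerivAt (fun v' => Tv n u v') (Tvv n u v) v := by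
  simp only [Tv, Tvv]
  apply HasDerivAt.fun_sum
  intro k hk
  have h := ((hasDerivAt_pow (n - k) v).const_mul ((n - k + 1 : ℕ) : ℝ)).const_mul
      (cc n k * u ^ k)
  convert h using 2

lemma hTv_u (n : ℕ) (u v : ℝ) : HasDerivAt (fun u' => Tv n u' v) (Tuv n u v) u := by
  simp only [Tv, Tuv]
  apply HasDerivAt.fun_sum
  intro k hk
  have h := ((hasDerivAt_pow k u).const_mul (cc n k)).mul_const
      (((n - k + 1 : ℕ) : ℝ) * v ^ (n - k))
  convert h using 2

lemma hTu_u (n : ℕ) (u v : ℝ) : HasDerivAt (fun u' => Tu n u' v) (Tuu n u v) u := by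
  simp only [Tu, Tuu]
  apply HasDerivAt.fun_sum
  intro k hk
  have h := (((hasDerivAt_pow (k - 1) u).const_mul ((k : ℝ))).const_mul (cc n k)).mul_const
      (v ^ (n - k + 1))
  convert h using 2

lemma key_nat (n k : ℕ) (hk1 : 1 ≤ k) (hk : k < n) :
    n.choose k * n.choose (k - 1) * ((n - k + 1) * (n - k)) =
      n.choose (k + 1) * n.choose k * ((k + 1) * k) := by
  obtain ⟨j, rfl⟩ : ∃ j, k = j + 1 := ⟨k - 1, by omega⟩
  have h1 : n.choose (j + 1) * (j + 1) = n.choose j * (n - j) := Nat.choose_succ_right_eq n j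
  have h2 : n.choose (j + 1 + 1) * (j + 1 + 1) = n.choose (j + 1) * (n - (j + 1)) :=
    Nat.choose_succ_right_eq n (j + 1)
  have hnj : n - j = n - (j + 1) + 1 := by omega
  calc n.choose (j + 1) * n.choose (j + 1 - 1) * ((n - (j + 1) + 1) * (n - (j + 1)))
      = (n.choose (j + 1) * (n - (j + 1))) * (n.choose j * (n - j)) := by
        simp only [Nat.add_sub_cancel, hnj]; ring
    _ = (n.choose (j + 1 + 1) * (j + 1 + 1)) * (n.choose (j + 1) * (j + 1)) := by
        rw [h1, h2]
    _ = n.choose (j + 1 + 1) * n.choose (j + 1) * ((j + 1 + 1) * (j + 1)) := by ring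

lemma key (n : ℕ) (u v : ℝ) : v * Tvv n u v = u * Tuu n u v := by
  simp only [Tvv, Tuu, Finset.mul_sum]
  rw [Finset.sum_range_succ, Finset.sum_range_succ']
  have hlast : v * (cc n n * u ^ n *
      (((n - n + 1 : ℕ) : ℝ) * (((n - n : ℕ) : ℝ) * v ^ (n - n - 1)))) = 0 := by
    simp
  have hfirst : u * (cc n 0 * ((0 : ℕ) * (((0 - 1 : ℕ) : ℝ) * u ^ (0 - 1 - 1))) *
      v ^ (n - 0 + 1)) = 0 := by
    simp
  rw [hlast, hfirst]
  simp only [add_zero]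
  apply Finset.sum_congr rfl
  intro k hk
  rw [Finset.mem_range] at hk
  rcases Nat.eq_zero_or_pos k with h0 | h1
  · subst h0
    simp [cc]
  · have hsub1 : n - (k + 1) + 1 = n - k := by omega
    have hsub2 : k + 1 - 1 = k := by omega
    have hsub3 : k + 1 - 1 - 1 = k - 1 := by omega
    rw [hsub1, hsub2]
    have hcc1 : cc n k = (n.choose k : ℝ) * (n.choose (k - 1) : ℝ) := by
      simp [cc, Nat.pos_iff_ne_zero.mp h1]
    have hcc2 : cc n (k + 1) = (n.choose (k + 1) : ℝ) * (n.choose k : ℝ) := by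
      simp [cc]
    have hev : n - k - 1 + 1 = n - k := by omega
    have heu : k - 1 + 1 = k := by omega
    have hpowv : v ^ (n - k - 1) * v = v ^ (n - k) := by rw [← pow_succ, hev]
    have hpowu : u ^ (k - 1) * u = u ^ k := by rw [← pow_succ, heu]
    have hkey : ((n.choose k : ℝ) * (n.choose (k - 1) : ℝ)) *
        (((n - k + 1 : ℕ) : ℝ) * ((n - k : ℕ) : ℝ)) =
        ((n.choose (k + 1) : ℝ) * (n.choose k : ℝ)) * (((k + 1 : ℕ) : ℝ) * (k : ℝ)) := by
      have := key_nat n k h1 hk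
      have hcast := congrArg (fun m : ℕ => (m : ℝ)) this
      push_cast at hcast ⊢
      linarith [hcast]
    rw [hcc1, hcc2]
    calc v * ((n.choose k : ℝ) * (n.choose (k - 1) : ℝ) * u ^ k *
          (((n - k + 1 : ℕ) : ℝ) * (((n - k : ℕ) : ℝ) * v ^ (n - k - 1))))
        = (((n.choose k : ℝ) * (n.choose (k - 1) : ℝ)) *
            (((n - k + 1 : ℕ) : ℝ) * ((n - k : ℕ) : ℝ))) * u ^ k * (v ^ (n - k - 1) * v) := by
          ring
      _ = (((n.choose (k + 1) : ℝ) * (n.choose k : ℝ)) *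
            (((k + 1 : ℕ) : ℝ) * (k : ℝ))) * u ^ k * v ^ (n - k) := by
          rw [hkey, hpowv]
      _ = u * ((n.choose (k + 1) : ℝ) * (n.choose k : ℝ) *
            (((k + 1 : ℕ) : ℝ) * (((k : ℕ)) * u ^ (k - 1))) * v ^ (n - k)) := by
          rw [← hpowu]; push_cast; ring

theorem shallow_water_exactness (n : ℕ) (hn : 1 ≤ n) (u v : ℝ) :
    deriv (fun v' =>
        (u + v') * deriv (fun u' => Tsw n u' v') u
          + 2 * v' * deriv (fun w => Tsw n u w) v' - Tsw n u v') v =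
      deriv (fun u' =>
        (u' + v) * deriv (fun w => Tsw n u' w) v
          + 2 * u' * deriv (fun w => Tsw n w v) u' - Tsw n u' v) u := by
  have hL : (fun v' => (u + v') * deriv (fun u' => Tsw n u' v') u
      + 2 * v' * deriv (fun w => Tsw n u w) v' - Tsw n u v')
      = fun v' => (u + v') * Tu n u v' + 2 * v' * Tv n u v' - Tsw n u v' := by
    funext v'
    rw [(hT_u n u v').deriv, (hT_v n u v').deriv]
  have hR : (fun u' => (u' + v) * deriv (fun w => Tsw n u' w) v
      + 2 * u' * deriv (fun w => Tsw n w v) u' - Tsw n u' v)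
      = fun u' => (u' + v) * Tv n u' v + 2 * u' * Tu n u' v - Tsw n u' v := by
    funext u'
    rw [(hT_v n u' v).deriv, (hT_u n u' v).deriv]
  rw [hL, hR]
  have HL : HasDerivAt (fun v' => (u + v') * Tu n u v' + 2 * v' * Tv n u v' - Tsw n u v')
      ((1 * Tu n u v + (u + v) * Tuv n u v) + (2 * 1 * Tv n u v + 2 * v * Tvv n u v)
        - Tv n u v) v := by
    exact ((((hasDerivAt_id v).const_add u).mul (hTu_v n u v)).add
      ((((hasDerivAt_id v).const_mul 2).mul (hTv_v n u v)))).sub (hT_v n u v)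
  have HR : HasDerivAt (fun u' => (u' + v) * Tv n u' v + 2 * u' * Tu n u' v - Tsw n u' v)
      ((1 * Tv n u v + (u + v) * Tuv n u v) + (2 * 1 * Tu n u v + 2 * u * Tuu n u v)
        - Tu n u v) u := by
    exact ((((hasDerivAt_id u).add_const v).mul (hTv_u n u v)).add
      ((((hasDerivAt_id u).const_mul 2).mul (hTu_u n u v)))).sub (hT_u n u v)
  rw [HL.deriv, HR.deriv]
  have hkey := key n u v
  ring_nf
  ring_nf at hkey
  linarith
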